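/- Let G be a group and let Θ(G) be the kernel of the epimorphism ρ : ν(G) → G determined by g ↦ g and h^φ ↦ h. Then Θ(G) centralizes the subgroup [G, G^φ] of ν(G), i.e. every element of Θ(G) commutes with every element of [G, G^φ]. -/

import Mathlib

namespace TensorNu

universe u

/-- The commutator `[x,y] = x⁻¹y⁻¹xy`. -/
def comm {K : Type*} [Group K] (x y : K) : K := x⁻¹ * y⁻¹ * x * y

/-- Conjugation `x^y = y⁻¹xy`. -/
def conj {K : Type*} [Group K] (x y : K) : K := y⁻¹ * x * y

variable (G : Type u) [Group G]

/-- The defining relators of `ν(G)`, as elements of the free group on `G ⊕ G`,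
where `Sum.inl` corresponds to the canonical copy of `G` and `Sum.inr` to the
isomorphic copy `G^φ` (`g ↦ g^φ`).  They comprise the multiplication tables of
`G` and of `G^φ`, together with the relations
`[g₁,g₂^φ]^{g₃} = [g₁^{g₃},(g₂^{g₃})^φ]` and `[g₁,g₂^φ]^{g₃} = [g₁,g₂^φ]^{g₃^φ}`. -/
def nuRels : Set (FreeGroup (G ⊕ G)) :=
  {r | (∃ g h : G, r = FreeGroup.of (Sum.inl g) * FreeGroup.of (Sum.inl h) *
          (FreeGroup.of (Sum.inl (g * h)))⁻¹)
     ∨ (∃ g h : G, r = FreeGroup.of (Sum.inr g) * FreeGroup.of (Sum.inr h) *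
          (FreeGroup.of (Sum.inr (g * h)))⁻¹)
     ∨ (∃ g₁ g₂ g₃ : G, r =
          conj (comm (FreeGroup.of (Sum.inl g₁)) (FreeGroup.of (Sum.inr g₂)))
              (FreeGroup.of (Sum.inl g₃)) *
            (comm (FreeGroup.of (Sum.inl (conj g₁ g₃)))
              (FreeGroup.of (Sum.inr (conj g₂ g₃))))⁻¹)
     ∨ (∃ g₁ g₂ g₃ : G, r =
          conj (comm (FreeGroup.of (Sum.inl g₁)) (FreeGroup.of (Sum.inr g₂)))
              (FreeGroup.of (Sum.inl g₃)) *
            (conj (comm (FreeGroup.of (Sum.inl g₁)) (FreeGroup.of (Sum.inr g₂)))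
              (FreeGroup.of (Sum.inr g₃)))⁻¹)}

/-- The group `ν(G)`. -/
abbrev Nu := PresentedGroup (nuRels G)

/-- The canonical image of `g ∈ G` in `ν(G)`. -/
def ι (g : G) : Nu G := PresentedGroup.of (Sum.inl g)

/-- The canonical image `g^φ` of `g ∈ G` (via the copy `G^φ`) in `ν(G)`. -/
def ιφ (g : G) : Nu G := PresentedGroup.of (Sum.inr g)

/-- The set `T⊗(G)` of tensors `[a, b^φ]`, `a, b ∈ G`. -/
def tensorSet : Set (Nu G) := {x | ∃ a b : G, x = comm (ι G a) (ιφ G b)}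

/-- The image of `G` in `ν(G)` as a subgroup. -/
def GSub : Subgroup (Nu G) := Subgroup.closure (Set.range (ι G))

/-- The image of `G^φ` in `ν(G)` as a subgroup. -/
def GφSub : Subgroup (Nu G) := Subgroup.closure (Set.range (ιφ G))

/-- The non-abelian tensor square `[G, G^φ] ≤ ν(G)`. -/
def tensorSquare : Subgroup (Nu G) := ⁅GSub G, GφSub G⁆

/-- `[S, x]`: the subgroup generated by the commutators `[s, x]`, `s ∈ S`. -/
def commSub {K : Type*} [Group K] (S : Set K) (x : K) : Subgroup K :=
  Subgroup.closure {c | ∃ s ∈ S, c = comm s x}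

end TensorNu

namespace TensorNu

section Aux

open scoped commutatorElement

variable (G : Type u) [Group G]

lemma mk_rel_eq_one {α : Type*} {rels : Set (FreeGroup α)} {r : FreeGroup α} (h : r ∈ rels) :
    PresentedGroup.mk rels r = 1 :=
  (QuotientGroup.eq_one_iff _).2 (Subgroup.subset_normalClosure h)

lemma map_comm' {K L : Type*} [Group K] [Group L] (f : K →* L) (x y : K) :
    f (comm x y) = comm (f x) (f y) := by simp [comm]

lemma map_conj' {K L : Type*} [Group K] [Group L] (f : K →* L) (x y : K) :
    f (conj x y) = conj (f x) (f y) := by simp [conj]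

lemma ι_mul (g h : G) : ι G g * ι G h = ι G (g * h) := by
  have := mk_rel_eq_one (rels := nuRels G) (Or.inl ⟨g, h, rfl⟩)
  simpa [ι, PresentedGroup.of, map_mul, mul_inv_eq_one] using this

lemma ιφ_mul (g h : G) : ιφ G g * ιφ G h = ιφ G (g * h) := by
  have := mk_rel_eq_one (rels := nuRels G) (Or.inr (Or.inl ⟨g, h, rfl⟩))
  simpa [ιφ, PresentedGroup.of, map_mul, mul_inv_eq_one] using this

def fι : G →* Nu G := MonoidHom.mk' (ι G) (fun a b => (ι_mul G a b).symm)

def fιφ : G →* Nu G := MonoidHom.mk' (ιφ G) (fun a b => (ιφ_mul G a b).symm)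

lemma ι_inv (g : G) : (ι G g)⁻¹ = ι G g⁻¹ := ((fι G).map_inv g).symm

lemma ιφ_inv (g : G) : (ιφ G g)⁻¹ = ιφ G g⁻¹ := ((fιφ G).map_inv g).symm

lemma rel3 (g₁ g₂ g₃ : G) :
    conj (comm (ι G g₁) (ιφ G g₂)) (ι G g₃) = comm (ι G (conj g₁ g₃)) (ιφ G (conj g₂ g₃)) := by
  have := mk_rel_eq_one (rels := nuRels G) (Or.inr (Or.inr (Or.inl ⟨g₁, g₂, g₃, rfl⟩)))
  rw [map_mul, map_inv, map_conj', map_comm', map_comm', mul_inv_eq_one] at this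
  exact this

lemma rel4 (g₁ g₂ g₃ : G) :
    conj (comm (ι G g₁) (ιφ G g₂)) (ι G g₃) = conj (comm (ι G g₁) (ιφ G g₂)) (ιφ G g₃) := by
  have := mk_rel_eq_one (rels := nuRels G) (Or.inr (Or.inr (Or.inr ⟨g₁, g₂, g₃, rfl⟩)))
  rw [map_mul, map_inv, map_conj', map_conj', map_comm', mul_inv_eq_one] at this
  exact this

lemma mem_GSub {x : Nu G} (hx : x ∈ GSub G) : ∃ g, ι G g = x := by
  have : GSub G = (fι G).range := by
    rw [GSub, ← (fι G).range.closure_eq]; rfl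
  rw [this] at hx; exact hx

lemma mem_GφSub {x : Nu G} (hx : x ∈ GφSub G) : ∃ g, ιφ G g = x := by
  have : GφSub G = (fιφ G).range := by
    rw [GφSub, ← (fιφ G).range.closure_eq]; rfl
  rw [this] at hx; exact hx

lemma commutatorElement_eq_comm (a b : G) : ⁅ι G a, ιφ G b⁆ = comm (ι G a⁻¹) (ιφ G b⁻¹) := by
  rw [← ι_inv, ← ιφ_inv]; simp [comm, commutatorElement_def, mul_assoc]

lemma tensorSet_subset : tensorSet G ⊆ (tensorSquare G : Set (Nu G)) := by
  rintro x ⟨a, b, rfl⟩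
  have : comm (ι G a) (ιφ G b) = ⁅ι G a⁻¹, ιφ G b⁻¹⁆ := by
    rw [commutatorElement_eq_comm]; simp
  rw [this]
  exact Subgroup.commutator_mem_commutator
    (Subgroup.subset_closure (Set.mem_range_self _))
    (Subgroup.subset_closure (Set.mem_range_self _))

/-- Conjugation by `(ι g)⁻¹` maps the tensor square into itself. -/
lemma conj_ι_mem (g : G) {w : Nu G} (hw : w ∈ tensorSquare G) :
    (ι G g)⁻¹ * w * ι G g ∈ tensorSquare G := by
  have key : ∀ a b : G, (ι G g)⁻¹ * ⁅ι G a, ιφ G b⁆ * ι G g ∈ tensorSquare G := by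
    intro a b
    have h1 : (ι G g)⁻¹ * ⁅ι G a, ιφ G b⁆ * ι G g
        = conj (comm (ι G a⁻¹) (ιφ G b⁻¹)) (ι G g) := by
      rw [commutatorElement_eq_comm]; simp [conj, mul_assoc]
    rw [h1, rel3]
    exact tensorSet_subset G ⟨_, _, rfl⟩
  -- use the conjugation automorphism
  let f : Nu G →* Nu G := (MulAut.conj ((ι G g)⁻¹)).toMonoidHom
  have hf : ∀ x : Nu G, f x = (ι G g)⁻¹ * x * ι G g := by
    intro x; simp [f, MulAut.conj_apply, mul_assoc]
  have hmap : (tensorSquare G).map f ≤ tensorSquare G := by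
    rw [tensorSquare, Subgroup.commutator_def, MonoidHom.map_closure]
    apply Subgroup.closure_le _ |>.2
    rintro y ⟨z, ⟨p, hp, q, hq, rfl⟩, rfl⟩
    obtain ⟨a, rfl⟩ := mem_GSub G hp
    obtain ⟨b, rfl⟩ := mem_GφSub G hq
    rw [hf]
    exact key a b
  have : f w ∈ (tensorSquare G).map f := Subgroup.mem_map_of_mem f hw
  have := hmap this
  rwa [hf] at this

lemma conj_ιφ_mem (g : G) {w : Nu G} (hw : w ∈ tensorSquare G) :
    (ιφ G g)⁻¹ * w * ιφ G g ∈ tensorSquare G := by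
  have key : ∀ a b : G, (ιφ G g)⁻¹ * ⁅ι G a, ιφ G b⁆ * ιφ G g ∈ tensorSquare G := by
    intro a b
    have h1 : (ιφ G g)⁻¹ * ⁅ι G a, ιφ G b⁆ * ιφ G g
        = conj (comm (ι G a⁻¹) (ιφ G b⁻¹)) (ιφ G g) := by
      rw [commutatorElement_eq_comm]; simp [conj, mul_assoc]
    rw [h1, ← rel4, rel3]
    exact tensorSet_subset G ⟨_, _, rfl⟩
  let f : Nu G →* Nu G := (MulAut.conj ((ιφ G g)⁻¹)).toMonoidHom
  have hf : ∀ x : Nu G, f x = (ιφ G g)⁻¹ * x * ιφ G g := by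
    intro x; simp [f, MulAut.conj_apply, mul_assoc]
  have hmap : (tensorSquare G).map f ≤ tensorSquare G := by
    rw [tensorSquare, Subgroup.commutator_def, MonoidHom.map_closure]
    apply Subgroup.closure_le _ |>.2
    rintro y ⟨z, ⟨p, hp, q, hq, rfl⟩, rfl⟩
    obtain ⟨a, rfl⟩ := mem_GSub G hp
    obtain ⟨b, rfl⟩ := mem_GφSub G hq
    rw [hf]
    exact key a b
  have : f w ∈ (tensorSquare G).map f := Subgroup.mem_map_of_mem f hw
  have := hmap this
  rwa [hf] at this

lemma tensorSquare_normal : (tensorSquare G).Normal := by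
  have htop : ∀ x : Nu G, x ∈ Subgroup.normalizer (tensorSquare G : Set (Nu G)) := by
    intro x
    apply PresentedGroup.generated_by
    intro j
    rw [Subgroup.mem_normalizer_iff]
    intro h
    cases j with
    | inl g =>
      show h ∈ tensorSquare G ↔ ι G g * h * (ι G g)⁻¹ ∈ tensorSquare G
      constructor
      · intro hh
        have := conj_ι_mem G g⁻¹ hh
        rw [← ι_inv, inv_inv] at this
        exact this
      · intro hh
        have := conj_ι_mem G g hh
        simpa [mul_assoc] using this
    | inr g =>
      show h ∈ tensorSquare G ↔ ιφ G g * h * (ιφ G g)⁻¹ ∈ tensorSquare G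
      constructor
      · intro hh
        have := conj_ιφ_mem G g⁻¹ hh
        rw [← ιφ_inv, inv_inv] at this
        exact this
      · intro hh
        have := conj_ιφ_mem G g hh
        simpa [mul_assoc] using this
  constructor
  intro n hn g
  have := (Subgroup.mem_normalizer_iff.1 (htop g)) n
  exact this.1 hn

/-- `d g = ι g * (ιφ g)⁻¹`. -/
def dd (g : G) : Nu G := ι G g * (ιφ G g)⁻¹

lemma dd_comm_tensor (a b g : G) :
    dd G g * comm (ι G a) (ιφ G b) = comm (ι G a) (ιφ G b) * dd G g := by
  have h := rel4 G a b g
  set t := comm (ι G a) (ιφ G b)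
  have h' : (ι G g)⁻¹ * t * ι G g = (ιφ G g)⁻¹ * t * ιφ G g := h
  -- rearrange: t * (ι g * (ιφ g)⁻¹) = (ι g * (ιφ g)⁻¹) * t
  have := congrArg (fun z => ι G g * z * (ιφ G g)⁻¹) h'
  simp only [mul_assoc, mul_inv_cancel_left, mul_inv_cancel, mul_one] at this
  simp only [dd, mul_assoc]
  exact this.symm

lemma dd_mem_centralizer (g : G) :
    dd G g ∈ Subgroup.centralizer (tensorSquare G : Set (Nu G)) := by
  have hle : tensorSquare G ≤ Subgroup.centralizer {dd G g} := by
    rw [tensorSquare, Subgroup.commutator_le]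
    intro p hp q hq
    obtain ⟨a, rfl⟩ := mem_GSub G hp
    obtain ⟨b, rfl⟩ := mem_GφSub G hq
    rw [Subgroup.mem_centralizer_iff]
    rintro h rfl
    rw [commutatorElement_eq_comm]
    exact dd_comm_tensor G a⁻¹ b⁻¹ g
  rw [Subgroup.mem_centralizer_iff]
  intro h hh
  exact (Subgroup.mem_centralizer_iff.1 (hle hh) (dd G g) rfl).symm

lemma centralizer_normal : (Subgroup.centralizer (tensorSquare G : Set (Nu G))).Normal := by
  haveI hN := tensorSquare_normal G
  constructor
  intro n hn g
  rw [Subgroup.mem_centralizer_iff]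
  intro h hh
  have hh' : g⁻¹ * h * g ∈ tensorSquare G := by
    have := hN.conj_mem h hh g⁻¹
    simpa using this
  have hc := Subgroup.mem_centralizer_iff.1 hn _ hh'
  have := congrArg (fun z => g * z * g⁻¹) hc
  simp only [mul_assoc, mul_inv_cancel_left, inv_mul_cancel_left] at this
  calc h * (g * n * g⁻¹) = g * (g⁻¹ * h * g * n) * g⁻¹ := by group
    _ = g * (n * (g⁻¹ * h * g)) * g⁻¹ := by rw [hc]
    _ = g * n * g⁻¹ * h := by group

end Aux

/-- `Θ(G) = ker ρ` centralizes the subgroup `[G, G^φ]` of `ν(G)`. -/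
theorem theta_centralizes (G : Type u) [Group G] (ρ : Nu G →* G)
    (hρ₁ : ∀ g : G, ρ (ι G g) = g) (hρ₂ : ∀ h : G, ρ (ιφ G h) = h) :
    ∀ θ ∈ ρ.ker, ∀ x ∈ tensorSquare G, Commute θ x := by
  set N : Subgroup (Nu G) := Subgroup.normalClosure {x : Nu G | ∃ g, x = dd G g} with hNdef
  haveI hNnorm : N.Normal := Subgroup.normalClosure_normal
  haveI hC := centralizer_normal G
  have hNC : N ≤ Subgroup.centralizer (tensorSquare G : Set (Nu G)) := by
    apply Subgroup.normalClosure_le_normal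
    rintro x ⟨g, rfl⟩
    exact dd_mem_centralizer G g
  -- show ker ρ ≤ N
  have hker : ρ.ker ≤ N := by
    intro θ hθ
    let π := QuotientGroup.mk' N
    let s : G →* Nu G ⧸ N := π.comp (fι G)
    have hdg : ∀ g : G, π (dd G g) = 1 := by
      intro g
      rw [← MonoidHom.mem_ker, QuotientGroup.ker_mk']
      exact Subgroup.subset_normalClosure ⟨g, rfl⟩
    have heq : s.comp ρ = π := by
      apply PresentedGroup.ext
      intro x
      cases x with
      | inl g =>
        show s (ρ (ι G g)) = π (ι G g)
        rw [hρ₁]; rfl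
      | inr g =>
        show s (ρ (ιφ G g)) = π (ιφ G g)
        rw [hρ₂]
        show π (ι G g) = π (ιφ G g)
        have : ι G g = dd G g * ιφ G g := by simp [dd, mul_assoc]
        rw [this, map_mul, hdg, one_mul]
    have : π θ = 1 := by
      rw [← heq]
      show s (ρ θ) = 1
      rw [MonoidHom.mem_ker.1 hθ, map_one]
    exact (QuotientGroup.eq_one_iff θ).mp this
  intro θ hθ x hx
  have := Subgroup.mem_centralizer_iff.1 (hNC (hker hθ)) x hx
  exact this.symm



end TensorNu
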